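/- Let (c₁,c₂) ∈ ℝ². The polynomial D₂(c₁,c₂;·) has exactly two roots, counted with multiplicity, with real part ≤ −1/2 (and hence its remaining two roots have real part > −1/2) if and only if Re[α₂(c₁,c₂)] ≤ −1/2. -/

import Mathlib

noncomputable section

/-- The principal branch of the complex square root:
`√z = √r·e^{iφ/2}` for `z = r·e^{iφ}` with `r > 0` and `-π < φ ≤ π`. -/
def csqrt (z : ℂ) : ℂ := z ^ (1/2 : ℂ)

/-- `α₁(c₁,c₂) = 3/2 - (1/2)√(5-4c₁+4√(1-4c₁+c₁²-c₂))`. -/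
def alpha1 (c₁ c₂ : ℝ) : ℂ :=
  3/2 - (1/2) * csqrt (5 - 4 * (c₁ : ℂ) + 4 * csqrt (1 - 4 * (c₁ : ℂ) + (c₁ : ℂ) ^ 2 - (c₂ : ℂ)))

/-- `α₂(c₁,c₂) = 3/2 - (1/2)√(5-4c₁-4√(1-4c₁+c₁²-c₂))`. -/
def alpha2 (c₁ c₂ : ℝ) : ℂ :=
  3/2 - (1/2) * csqrt (5 - 4 * (c₁ : ℂ) - 4 * csqrt (1 - 4 * (c₁ : ℂ) + (c₁ : ℂ) ^ 2 - (c₂ : ℂ)))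

/-- `α₃(c₁,c₂) = 3/2 + (1/2)√(5-4c₁-4√(1-4c₁+c₁²-c₂))`. -/
def alpha3 (c₁ c₂ : ℝ) : ℂ :=
  3/2 + (1/2) * csqrt (5 - 4 * (c₁ : ℂ) - 4 * csqrt (1 - 4 * (c₁ : ℂ) + (c₁ : ℂ) ^ 2 - (c₂ : ℂ)))

/-- `α₄(c₁,c₂) = 3/2 + (1/2)√(5-4c₁+4√(1-4c₁+c₁²-c₂))`. -/
def alpha4 (c₁ c₂ : ℝ) : ℂ :=
  3/2 + (1/2) * csqrt (5 - 4 * (c₁ : ℂ) + 4 * csqrt (1 - 4 * (c₁ : ℂ) + (c₁ : ℂ) ^ 2 - (c₂ : ℂ)))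

open Polynomial in
/-- The quartic polynomial `D₂(c₁,c₂;·) = X(X-1)(X-2)(X-3) + c₁[X(X-1)+(X-2)(X-3)] + c₂`
as a polynomial over `ℂ`. -/
def D2poly (c₁ c₂ : ℝ) : Polynomial ℂ :=
  X * (X - 1) * (X - 2) * (X - 3) + C (c₁ : ℂ) * (X * (X - 1) + (X - 2) * (X - 3)) + C (c₂ : ℂ)

/-! ### Auxiliary lemmas about `csqrt` -/

lemma csqrt_sq (z : ℂ) : (csqrt z) ^ 2 = z := by
  have := Complex.cpow_nat_inv_pow z (n := 2) two_ne_zero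
  simpa [csqrt, one_div] using this

lemma re_csqrt (z : ℂ) (hz : z ≠ 0) :
    (csqrt z).re = Real.exp (Real.log ‖z‖ / 2) * Real.cos (z.arg / 2) := by
  rw [csqrt, Complex.cpow_def_of_ne_zero hz, Complex.exp_re]
  simp [Complex.log_re, Complex.log_im, Complex.mul_re, Complex.mul_im]
  ring_nf

lemma re_csqrt_nonneg (z : ℂ) : 0 ≤ (csqrt z).re := by
  by_cases hz : z = 0
  · simp [hz, csqrt, Complex.zero_cpow (by norm_num : (1/2 : ℂ) ≠ 0)]
  · rw [re_csqrt z hz]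
    apply mul_nonneg (Real.exp_nonneg _)
    apply Real.cos_nonneg_of_mem_Icc
    constructor
    · linarith [Complex.neg_pi_lt_arg z]
    · linarith [Complex.arg_le_pi z]

lemma re_csqrt_conj (z : ℂ) (hz : z.im ≠ 0) :
    (csqrt (starRingEnd ℂ z)).re = (csqrt z).re := by
  have hz0 : z ≠ 0 := fun h => hz (by simp [h])
  have hz0' : (starRingEnd ℂ z) ≠ 0 := by simpa using hz0
  rw [re_csqrt _ hz0, re_csqrt _ hz0', Complex.norm_conj, Complex.arg_conj]
  have : z.arg ≠ Real.pi := by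
    intro h
    have := Complex.arg_eq_pi_iff.mp h
    exact hz this.2
  rw [if_neg this]
  simp [Real.cos_neg, neg_div]

lemma csqrt_ofReal_nonneg {x : ℝ} (hx : 0 ≤ x) : csqrt (x : ℂ) = (Real.sqrt x : ℂ) := by
  rw [csqrt, show (1/2 : ℂ) = ((1/2 : ℝ) : ℂ) by norm_num, ← Complex.ofReal_cpow hx,
    Real.sqrt_eq_rpow]

lemma re_csqrt_neg_real {x : ℝ} (hx : x < 0) : (csqrt (x : ℂ)).re = 0 := by
  have hz : (x:ℂ) ≠ 0 := by exact_mod_cast ne_of_lt hx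
  rw [re_csqrt _ hz, Complex.arg_ofReal_of_neg hx]
  simp [Real.cos_pi_div_two]

lemma csqrt_ne_zero {z : ℂ} (hz : z ≠ 0) : csqrt z ≠ 0 := by
  intro h
  apply hz
  rw [← csqrt_sq z, h]
  ring

/-! ### Factorization of `D2poly` -/

open Polynomial in
lemma D2poly_factor (c₁ c₂ : ℝ) :
    D2poly c₁ c₂ = (X - C (alpha1 c₁ c₂)) * (X - C (alpha2 c₁ c₂)) *
      (X - C (alpha3 c₁ c₂)) * (X - C (alpha4 c₁ c₂)) := by
  apply Polynomial.funext
  intro x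
  set u := csqrt (1 - 4 * (c₁ : ℂ) + (c₁ : ℂ) ^ 2 - (c₂ : ℂ)) with hu_def
  set A := csqrt (5 - 4 * (c₁ : ℂ) + 4 * u) with hA_def
  set B := csqrt (5 - 4 * (c₁ : ℂ) - 4 * u) with hB_def
  have hu : u ^ 2 = 1 - 4 * (c₁ : ℂ) + (c₁ : ℂ) ^ 2 - (c₂ : ℂ) := csqrt_sq _
  have hA : A ^ 2 = 5 - 4 * (c₁ : ℂ) + 4 * u := csqrt_sq _
  have hB : B ^ 2 = 5 - 4 * (c₁ : ℂ) - 4 * u := csqrt_sq _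
  simp only [D2poly, alpha1, alpha2, alpha3, alpha4, ← hu_def, ← hA_def, ← hB_def,
    eval_add, eval_mul, eval_sub, eval_X, eval_C, eval_one, eval_ofNat]
  linear_combination hu + (((x-3/2)^2 - B^2/4)/4) * hA +
    (((x-3/2)^2 - (5 - 4*(c₁:ℂ) + 4*u)/4)/4) * hB

open Polynomial in
lemma D2poly_roots (c₁ c₂ : ℝ) :
    (D2poly c₁ c₂).roots = {alpha1 c₁ c₂, alpha2 c₁ c₂, alpha3 c₁ c₂, alpha4 c₁ c₂} := by
  rw [D2poly_factor]
  rw [roots_mul (mul_ne_zero (mul_ne_zero (mul_ne_zero (X_sub_C_ne_zero _) (X_sub_C_ne_zero _))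
      (X_sub_C_ne_zero _)) (X_sub_C_ne_zero _)),
    roots_mul (mul_ne_zero (mul_ne_zero (X_sub_C_ne_zero _) (X_sub_C_ne_zero _)) (X_sub_C_ne_zero _)),
    roots_mul (mul_ne_zero (X_sub_C_ne_zero _) (X_sub_C_ne_zero _)),
    roots_X_sub_C, roots_X_sub_C, roots_X_sub_C, roots_X_sub_C]
  rfl

/-! ### Real parts of the roots -/

lemma alpha1_re (c₁ c₂ : ℝ) : (alpha1 c₁ c₂).re =
    3/2 - (csqrt (5 - 4 * (c₁ : ℂ) + 4 * csqrt (1 - 4 * (c₁ : ℂ) + (c₁ : ℂ) ^ 2 - (c₂ : ℂ)))).re / 2 := by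
  simp [alpha1, Complex.sub_re, Complex.mul_re, Complex.div_re]
  ring

lemma alpha2_re (c₁ c₂ : ℝ) : (alpha2 c₁ c₂).re =
    3/2 - (csqrt (5 - 4 * (c₁ : ℂ) - 4 * csqrt (1 - 4 * (c₁ : ℂ) + (c₁ : ℂ) ^ 2 - (c₂ : ℂ)))).re / 2 := by
  simp [alpha2, Complex.sub_re, Complex.mul_re, Complex.div_re]
  ring

lemma alpha3_re (c₁ c₂ : ℝ) : (alpha3 c₁ c₂).re =
    3/2 + (csqrt (5 - 4 * (c₁ : ℂ) - 4 * csqrt (1 - 4 * (c₁ : ℂ) + (c₁ : ℂ) ^ 2 - (c₂ : ℂ)))).re / 2 := by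
  simp [alpha3, Complex.add_re, Complex.mul_re, Complex.div_re]
  ring

lemma alpha4_re (c₁ c₂ : ℝ) : (alpha4 c₁ c₂).re =
    3/2 + (csqrt (5 - 4 * (c₁ : ℂ) + 4 * csqrt (1 - 4 * (c₁ : ℂ) + (c₁ : ℂ) ^ 2 - (c₂ : ℂ)))).re / 2 := by
  simp [alpha4, Complex.add_re, Complex.mul_re, Complex.div_re]
  ring

lemma alpha3_re_gt (c₁ c₂ : ℝ) : -1/2 < (alpha3 c₁ c₂).re := by
  rw [alpha3_re]
  have := re_csqrt_nonneg (5 - 4 * (c₁ : ℂ) - 4 * csqrt (1 - 4 * (c₁ : ℂ) + (c₁ : ℂ) ^ 2 - (c₂ : ℂ)))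
  linarith

lemma alpha4_re_gt (c₁ c₂ : ℝ) : -1/2 < (alpha4 c₁ c₂).re := by
  rw [alpha4_re]
  have := re_csqrt_nonneg (5 - 4 * (c₁ : ℂ) + 4 * csqrt (1 - 4 * (c₁ : ℂ) + (c₁ : ℂ) ^ 2 - (c₂ : ℂ)))
  linarith

/-- The key implication: if `Re α₂ ≤ -1/2` then also `Re α₁ ≤ -1/2`. -/
lemma key (c₁ c₂ : ℝ) (h : (alpha2 c₁ c₂).re ≤ -1/2) : (alpha1 c₁ c₂).re ≤ -1/2 := by
  set t : ℝ := 1 - 4*c₁ + c₁^2 - c₂ with ht_def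
  have htc : (1 - 4 * (c₁ : ℂ) + (c₁ : ℂ) ^ 2 - (c₂ : ℂ)) = ((t : ℝ) : ℂ) := by
    rw [ht_def]; push_cast; ring
  rw [alpha1_re, htc]
  rw [alpha2_re, htc] at h
  by_cases ht : 0 ≤ t
  · -- inner square root is real
    rw [csqrt_ofReal_nonneg ht] at h ⊢
    set s : ℝ := Real.sqrt t with hs_def
    have hs : 0 ≤ s := Real.sqrt_nonneg t
    have hbc : (5 - 4 * (c₁ : ℂ) - 4 * ((s:ℝ):ℂ)) = (((5 - 4*c₁ - 4*s : ℝ)) : ℂ) := by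
      push_cast; ring
    have hac : (5 - 4 * (c₁ : ℂ) + 4 * ((s:ℝ):ℂ)) = (((5 - 4*c₁ + 4*s : ℝ)) : ℂ) := by
      push_cast; ring
    rw [hbc] at h
    rw [hac]
    set b : ℝ := 5 - 4*c₁ - 4*s
    set a : ℝ := 5 - 4*c₁ + 4*s
    by_cases hb : 0 ≤ b
    · rw [csqrt_ofReal_nonneg hb] at h
      simp only [Complex.ofReal_re] at h
      have h4 : (4:ℝ) ≤ Real.sqrt b := by linarith
      have hb16 : (16:ℝ) ≤ b := by
        have := Real.sq_sqrt hb
        nlinarith [Real.sqrt_nonneg b]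
      have ha : 0 ≤ a := by simp only [a, b] at hb16 ⊢; linarith
      rw [csqrt_ofReal_nonneg ha]
      simp only [Complex.ofReal_re]
      have ha16 : (16:ℝ) ≤ a := by simp only [a, b] at hb16 ⊢; linarith
      have : (4:ℝ) ≤ Real.sqrt a := by
        rw [show (4:ℝ) = Real.sqrt 16 by
          rw [show (16:ℝ) = 4^2 by norm_num, Real.sqrt_sq (by norm_num)]]
        exact Real.sqrt_le_sqrt ha16
      linarith
    · push_neg at hb
      rw [re_csqrt_neg_real hb] at h
      norm_num at h
  · -- inner square root is purely imaginary
    push_neg at ht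
    set u := csqrt ((t:ℝ):ℂ) with hu_def
    have hure : u.re = 0 := re_csqrt_neg_real ht
    have hune : u ≠ 0 := csqrt_ne_zero (by exact_mod_cast ne_of_lt ht)
    have huim : u.im ≠ 0 := by
      intro him
      exact hune (Complex.ext hure him)
    set z : ℂ := 5 - 4 * (c₁ : ℂ) - 4 * u with hz_def
    have hconj : starRingEnd ℂ z = 5 - 4 * (c₁ : ℂ) + 4 * u := by
      apply Complex.ext <;>
        simp [hz_def, Complex.sub_re, Complex.sub_im, Complex.mul_re, Complex.mul_im, hure]
    have hzim : z.im ≠ 0 := by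
      simp only [hz_def, Complex.sub_im, Complex.mul_im]
      simpa [hure] using (by simpa using mul_ne_zero (by norm_num : (4:ℝ) ≠ 0) huim)
    calc 3/2 - (csqrt (5 - 4 * (c₁ : ℂ) + 4 * u)).re / 2
        = 3/2 - (csqrt z).re / 2 := by rw [← hconj, re_csqrt_conj z hzim]
      _ ≤ -1/2 := h

open scoped Classical in
/-- `D₂(c₁,c₂;·)` has exactly two roots (with multiplicity) with real part `≤ -1/2`
(and hence its remaining two roots have real part `> -1/2`) iff `Re α₂(c₁,c₂) ≤ -1/2`. -/
theorem stmt6 (c₁ c₂ : ℝ) :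
    (Multiset.card ((D2poly c₁ c₂).roots.filter fun z => z.re ≤ -1/2) = 2 ∧
      Multiset.card ((D2poly c₁ c₂).roots.filter fun z => -1/2 < z.re) = 2) ↔
    (alpha2 c₁ c₂).re ≤ -1/2 := by
  rw [D2poly_roots]
  have h3 := alpha3_re_gt c₁ c₂
  have h4 := alpha4_re_gt c₁ c₂
  have h3' : ¬ (alpha3 c₁ c₂).re ≤ -1/2 := not_le.mpr h3
  have h4' : ¬ (alpha4 c₁ c₂).re ≤ -1/2 := not_le.mpr h4
  constructor
  · rintro ⟨h, -⟩
    by_contra hc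
    by_cases h1 : (alpha1 c₁ c₂).re ≤ -1/2 <;>
      simp [Multiset.insert_eq_cons, Multiset.filter_cons, Multiset.filter_singleton,
        h1, hc, h3', h4'] at h
  · intro h2
    have h1 := key c₁ c₂ h2
    have h1' : ¬ (-1/2 < (alpha1 c₁ c₂).re) := not_lt.mpr h1
    have h2' : ¬ (-1/2 < (alpha2 c₁ c₂).re) := not_lt.mpr h2
    constructor <;>
      simp [Multiset.insert_eq_cons, Multiset.filter_cons, Multiset.filter_singleton,
        h1, h2, h3', h4', h1', h2', h3, h4]
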